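/- arXiv:2201.12584 — 2 statements merged into one kernel-verified Lean document; each statement's English description precedes it below -/
import Mathlib

section
/- (Permutation equivariance of the simplicial complex filter bank.) Let B₁ be a real m×n matrix and B₂ be a real n×p matrix with B₁B₂ = 0, let H₀, H₁, H₂ be simplicial convolutional filters built from B₁, B₂ with coefficient sets (α_{0,l}, β_{0,l}), (α_{1,l}, β_{1,l}), (α_{2,l}, β_{2,l}), and for inputs x⁰ ∈ ℝᵐ, x¹ ∈ ℝⁿ, x² ∈ ℝᵖ define the filter-bank output y = H₀B₁ᵀx⁰ + H₁x¹ + H₂B₂x². Let σ₀, σ₁, σ₂ be permutations of the index sets of sizes m, n, p with permutation matrices P₀, P₁, P₂, and define the permuted incidence matrices B̃₁ = P₀ᵀB₁P₁, B̃₂ = P₁ᵀB₂P₂, the permuted filters H̃ᵢ built from B̃₁, B̃₂ with the same coefficients, and the permuted inputs x̃⁰ = P₀ᵀx⁰, x̃¹ = P₁ᵀx¹, x̃² = P₂ᵀx². Then the permuted filter-bank output ỹ = H̃₀B̃₁ᵀx̃⁰ + H̃₁x̃¹ + H̃₂B̃₂x̃² satisfies ỹ = P₁ᵀy. -/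
open Matrix Finset

/-- A simplicial convolutional filter built from incidence matrices `B₁`, `B₂`:
`H = Σ_{l=0}^{L₁} α l • (B₁ᵀB₁)^l + Σ_{l=0}^{L₂} β l • (B₂B₂ᵀ)^l`. -/
noncomputable def scFilter {m n p : ℕ} (B₁ : Matrix (Fin m) (Fin n) ℝ)
    (B₂ : Matrix (Fin n) (Fin p) ℝ) (L₁ L₂ : ℕ) (α β : ℕ → ℝ) :
    Matrix (Fin n) (Fin n) ℝ :=
  (∑ l ∈ Finset.range (L₁ + 1), α l • (B₁ᵀ * B₁) ^ l)
    + ∑ l ∈ Finset.range (L₂ + 1), β l • (B₂ * B₂ᵀ) ^ l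

/-- The permutation matrix of a permutation `σ`: `P i j = 1` iff `j = σ i`. -/
def permMatrix {k : ℕ} (σ : Equiv.Perm (Fin k)) : Matrix (Fin k) (Fin k) ℝ :=
  Matrix.of fun i j => if j = σ i then 1 else 0

lemma permMatrix_transpose {k : ℕ} (σ : Equiv.Perm (Fin k)) :
    (permMatrix σ)ᵀ = permMatrix σ⁻¹ := by
  ext i j
  simp only [permMatrix, Matrix.transpose_apply, Matrix.of_apply]
  congr 1
  simp [Equiv.Perm.inv_def, Equiv.eq_symm_apply, eq_comm]

lemma perm_mul_transpose {k : ℕ} (σ : Equiv.Perm (Fin k)) :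
    permMatrix σ * (permMatrix σ)ᵀ = 1 := by
  ext i j
  simp [permMatrix, Matrix.mul_apply, Matrix.transpose_apply, Matrix.one_apply,
    ite_and, eq_comm (a := σ i)]
  simp [Finset.sum_ite_eq', Equiv.apply_eq_iff_eq, eq_comm]

lemma transpose_mul_perm {k : ℕ} (σ : Equiv.Perm (Fin k)) :
    (permMatrix σ)ᵀ * permMatrix σ = 1 := by
  rw [permMatrix_transpose]
  have := perm_mul_transpose σ⁻¹
  rwa [permMatrix_transpose, inv_inv] at this

lemma permConjPow {k : ℕ} (σ : Equiv.Perm (Fin k)) (M : Matrix (Fin k) (Fin k) ℝ) (l : ℕ) :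
    ((permMatrix σ)ᵀ * M * permMatrix σ) ^ l = (permMatrix σ)ᵀ * M ^ l * permMatrix σ := by
  induction l with
  | zero => simp [transpose_mul_perm]
  | succ l ih =>
      rw [pow_succ, pow_succ, ih]
      have : permMatrix σ * ((permMatrix σ)ᵀ * M * permMatrix σ)
          = M * permMatrix σ := by
        rw [← Matrix.mul_assoc, ← Matrix.mul_assoc, perm_mul_transpose, Matrix.one_mul]
      rw [Matrix.mul_assoc ((permMatrix σ)ᵀ * M ^ l), this, ← Matrix.mul_assoc,
        ← Matrix.mul_assoc, Matrix.mul_assoc _ (M ^ l) M]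

lemma scFilter_conj {m n p : ℕ} (B₁ : Matrix (Fin m) (Fin n) ℝ)
    (B₂ : Matrix (Fin n) (Fin p) ℝ) (L₁ L₂ : ℕ) (α β : ℕ → ℝ)
    (σ₀ : Equiv.Perm (Fin m)) (σ₁ : Equiv.Perm (Fin n)) (σ₂ : Equiv.Perm (Fin p)) :
    scFilter ((permMatrix σ₀)ᵀ * B₁ * permMatrix σ₁)
        ((permMatrix σ₁)ᵀ * B₂ * permMatrix σ₂) L₁ L₂ α β
      = (permMatrix σ₁)ᵀ * scFilter B₁ B₂ L₁ L₂ α β * permMatrix σ₁ := by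
  have h1 : ((permMatrix σ₀)ᵀ * B₁ * permMatrix σ₁)ᵀ * ((permMatrix σ₀)ᵀ * B₁ * permMatrix σ₁)
      = (permMatrix σ₁)ᵀ * (B₁ᵀ * B₁) * permMatrix σ₁ := by
    simp only [Matrix.transpose_mul, Matrix.transpose_transpose, Matrix.mul_assoc]
    rw [← Matrix.mul_assoc (permMatrix σ₀), perm_mul_transpose, Matrix.one_mul]
  have h2 : ((permMatrix σ₁)ᵀ * B₂ * permMatrix σ₂) * ((permMatrix σ₁)ᵀ * B₂ * permMatrix σ₂)ᵀ
      = (permMatrix σ₁)ᵀ * (B₂ * B₂ᵀ) * permMatrix σ₁ := by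
    simp only [Matrix.transpose_mul, Matrix.transpose_transpose, Matrix.mul_assoc]
    rw [← Matrix.mul_assoc (permMatrix σ₂), perm_mul_transpose, Matrix.one_mul]
  simp only [scFilter, h1, h2, permConjPow]
  simp [Matrix.mul_add, Matrix.add_mul, Matrix.mul_sum, Matrix.sum_mul,
    Matrix.mul_smul, Matrix.smul_mul]

lemma perm_cancel_left {k : ℕ} (σ : Equiv.Perm (Fin k)) {a : Type*} [Fintype a]
    (X : Matrix (Fin k) a ℝ) : permMatrix σ * ((permMatrix σ)ᵀ * X) = X := by
  rw [← Matrix.mul_assoc, perm_mul_transpose, Matrix.one_mul]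

lemma perm_cancel_left' {k : ℕ} (σ : Equiv.Perm (Fin k)) {a : Type*} [Fintype a]
    (X : Matrix (Fin k) a ℝ) : (permMatrix σ)ᵀ * (permMatrix σ * X) = X := by
  rw [← Matrix.mul_assoc, transpose_mul_perm, Matrix.one_mul]

theorem filter_bank_permutation_equivariance
    {m n p : ℕ} (B₁ : Matrix (Fin m) (Fin n) ℝ) (B₂ : Matrix (Fin n) (Fin p) ℝ)
    (hB : B₁ * B₂ = 0) (L₁ L₂ : ℕ)
    (α₀ β₀ α₁ β₁ α₂ β₂ : ℕ → ℝ)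
    (x0 : Fin m → ℝ) (x1 : Fin n → ℝ) (x2 : Fin p → ℝ)
    (σ₀ : Equiv.Perm (Fin m)) (σ₁ : Equiv.Perm (Fin n)) (σ₂ : Equiv.Perm (Fin p)) :
    (scFilter ((permMatrix σ₀)ᵀ * B₁ * permMatrix σ₁)
          ((permMatrix σ₁)ᵀ * B₂ * permMatrix σ₂) L₁ L₂ α₀ β₀).mulVec
        (((permMatrix σ₀)ᵀ * B₁ * permMatrix σ₁)ᵀ.mulVec ((permMatrix σ₀)ᵀ.mulVec x0))
      + (scFilter ((permMatrix σ₀)ᵀ * B₁ * permMatrix σ₁)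
          ((permMatrix σ₁)ᵀ * B₂ * permMatrix σ₂) L₁ L₂ α₁ β₁).mulVec
        ((permMatrix σ₁)ᵀ.mulVec x1)
      + (scFilter ((permMatrix σ₀)ᵀ * B₁ * permMatrix σ₁)
          ((permMatrix σ₁)ᵀ * B₂ * permMatrix σ₂) L₁ L₂ α₂ β₂).mulVec
        (((permMatrix σ₁)ᵀ * B₂ * permMatrix σ₂).mulVec ((permMatrix σ₂)ᵀ.mulVec x2)) =
    (permMatrix σ₁)ᵀ.mulVec
      ((scFilter B₁ B₂ L₁ L₂ α₀ β₀).mulVec (B₁ᵀ.mulVec x0)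
        + (scFilter B₁ B₂ L₁ L₂ α₁ β₁).mulVec x1
        + (scFilter B₁ B₂ L₁ L₂ α₂ β₂).mulVec (B₂.mulVec x2)) := by
  simp only [scFilter_conj, Matrix.mulVec_add, Matrix.mulVec_mulVec, Matrix.transpose_mul,
    Matrix.transpose_transpose]
  simp [Matrix.mul_assoc, perm_cancel_left, perm_cancel_left', perm_mul_transpose,
    transpose_mul_perm]
end

section
/- Let B₁ be a real m×n matrix and B₂ be a real n×p matrix with B₁B₂ = 0, let L = B₁ᵀB₁ + B₂B₂ᵀ, let H₀, H₁, H₂ be simplicial convolutional filters built from B₁, B₂ with coefficient sets (α_{i,0},…,α_{i,L₁}; β_{i,0},…,β_{i,L₂}) for i = 0,1,2, and for inputs x⁰ ∈ ℝᵐ, x¹ ∈ ℝⁿ, x² ∈ ℝᵖ let y = H₀B₁ᵀx⁰ + H₁x¹ + H₂B₂x² be the filter-bank output. If v ∈ ℝⁿ is a curl eigenvector, i.e. v = B₂z for some z ∈ ℝᵖ and Lv = λ·v, then vᵀy = (α_{1,0} + Σ_{l=0}^{L₂} β_{1,l} λ^l)·(vᵀx¹) + (α_{2,0} + Σ_{l=0}^{L₂}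 β_{2,l} λ^l)·(vᵀB₂x²); in particular the lower-adjacent signal x⁰ does not contribute at curl frequencies. -/
open Matrix Finset

lemma pow_mulVec_eig {n : ℕ} (M : Matrix (Fin n) (Fin n) ℝ) (v : Fin n → ℝ) (lam : ℝ)
    (h : M.mulVec v = lam • v) (l : ℕ) : (M ^ l).mulVec v = lam ^ l • v := by
  induction l with
  | zero => simp
  | succ k ih =>
      rw [pow_succ, ← mulVec_mulVec, h, mulVec_smul, ih, smul_smul, pow_succ]
      ring_nf

lemma dot_sym {n : ℕ} (M : Matrix (Fin n) (Fin n) ℝ) (hM : Mᵀ = M) (v w : Fin n → ℝ) :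
    v ⬝ᵥ M.mulVec w = M.mulVec v ⬝ᵥ w := by
  rw [dotProduct_mulVec, ← mulVec_transpose, hM]

lemma sum_mulVec' {n : ℕ} (s : Finset ℕ) (f : ℕ → Matrix (Fin n) (Fin n) ℝ) (w : Fin n → ℝ) :
    (∑ i ∈ s, f i).mulVec w = ∑ i ∈ s, (f i).mulVec w := by
  induction s using Finset.cons_induction with
  | empty => simp
  | cons a s ha ih => simp [Finset.sum_insert ha, add_mulVec, ih]

lemma dotProduct_sum' {n : ℕ} (v : Fin n → ℝ) (s : Finset ℕ) (f : ℕ → Fin n → ℝ) :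
    v ⬝ᵥ ∑ i ∈ s, f i = ∑ i ∈ s, v ⬝ᵥ f i := by
  induction s using Finset.cons_induction with
  | empty => simp
  | cons a s ha ih => simp [Finset.sum_insert ha, dotProduct_add, ih]

lemma filter_dot {m n p : ℕ} (B₁ : Matrix (Fin m) (Fin n) ℝ) (B₂ : Matrix (Fin n) (Fin p) ℝ)
    (v : Fin n → ℝ) (lam : ℝ)
    (h1 : (B₁ᵀ * B₁).mulVec v = 0) (h2 : (B₂ * B₂ᵀ).mulVec v = lam • v)
    (L₁ L₂ : ℕ) (α β : ℕ → ℝ) (w : Fin n → ℝ) :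
    v ⬝ᵥ (scFilter B₁ B₂ L₁ L₂ α β).mulVec w
      = (α 0 + ∑ l ∈ Finset.range (L₂ + 1), β l * lam ^ l) * (v ⬝ᵥ w) := by
  have h1' : (B₁ᵀ * B₁).mulVec v = (0 : ℝ) • v := by simpa using h1
  have hsym1 : ∀ l : ℕ, ((B₁ᵀ * B₁) ^ l)ᵀ = (B₁ᵀ * B₁) ^ l := by
    intro l; rw [transpose_pow]; congr 1; simp [transpose_mul]
  have hsym2 : ∀ l : ℕ, ((B₂ * B₂ᵀ) ^ l)ᵀ = (B₂ * B₂ᵀ) ^ l := by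
    intro l; rw [transpose_pow]; congr 1; simp [transpose_mul]
  unfold scFilter
  rw [add_mulVec, dotProduct_add, sum_mulVec', sum_mulVec', dotProduct_sum', dotProduct_sum']
  have e1 : ∀ l ∈ Finset.range (L₁ + 1),
      v ⬝ᵥ (α l • (B₁ᵀ * B₁) ^ l).mulVec w = (α l * (0 : ℝ) ^ l) * (v ⬝ᵥ w) := by
    intro l _
    rw [smul_mulVec, dotProduct_smul, dot_sym _ (hsym1 l),
      pow_mulVec_eig _ _ _ h1' l, smul_dotProduct]
    simp only [smul_eq_mul]
    ring
  have e2 : ∀ l ∈ Finset.range (L₂ + 1),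
      v ⬝ᵥ (β l • (B₂ * B₂ᵀ) ^ l).mulVec w = (β l * lam ^ l) * (v ⬝ᵥ w) := by
    intro l _
    rw [smul_mulVec, dotProduct_smul, dot_sym _ (hsym2 l),
      pow_mulVec_eig _ _ _ h2 l, smul_dotProduct]
    simp only [smul_eq_mul]
    ring
  rw [Finset.sum_congr rfl e1, Finset.sum_congr rfl e2, ← Finset.sum_mul, ← Finset.sum_mul]
  have : ∑ l ∈ Finset.range (L₁ + 1), α l * (0 : ℝ) ^ l = α 0 := by
    rw [Finset.sum_eq_single_of_mem 0 (by simp)]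
    · simp
    · intro b _ hb; simp [zero_pow hb]
  rw [this]; ring

theorem filter_bank_curl_response
    {m n p : ℕ} (B₁ : Matrix (Fin m) (Fin n) ℝ) (B₂ : Matrix (Fin n) (Fin p) ℝ)
    (hB : B₁ * B₂ = 0) (L₁ L₂ : ℕ)
    (α₀ β₀ α₁ β₁ α₂ β₂ : ℕ → ℝ)
    (x0 : Fin m → ℝ) (x1 : Fin n → ℝ) (x2 : Fin p → ℝ)
    (v : Fin n → ℝ) (z : Fin p → ℝ) (hv : v = B₂.mulVec z) (lam : ℝ)
    (heig : (B₁ᵀ * B₁ + B₂ * B₂ᵀ).mulVec v = lam • v) :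
    v ⬝ᵥ ((scFilter B₁ B₂ L₁ L₂ α₀ β₀).mulVec (B₁ᵀ.mulVec x0)
        + (scFilter B₁ B₂ L₁ L₂ α₁ β₁).mulVec x1
        + (scFilter B₁ B₂ L₁ L₂ α₂ β₂).mulVec (B₂.mulVec x2)) =
      (α₁ 0 + ∑ l ∈ Finset.range (L₂ + 1), β₁ l * lam ^ l) * (v ⬝ᵥ x1)
        + (α₂ 0 + ∑ l ∈ Finset.range (L₂ + 1), β₂ l * lam ^ l) * (v ⬝ᵥ B₂.mulVec x2) := by
  have hB1v : B₁.mulVec v = 0 := by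
    rw [hv, mulVec_mulVec, hB, zero_mulVec]
  have h1 : (B₁ᵀ * B₁).mulVec v = 0 := by
    rw [← mulVec_mulVec, hB1v, mulVec_zero]
  have h2 : (B₂ * B₂ᵀ).mulVec v = lam • v := by
    have := heig
    rwa [add_mulVec, h1, zero_add] at this
  have hvdot : v ⬝ᵥ B₁ᵀ.mulVec x0 = 0 := by
    rw [dotProduct_mulVec, ← mulVec_transpose, transpose_transpose, hB1v, zero_dotProduct]
  rw [dotProduct_add, dotProduct_add, filter_dot _ _ _ _ h1 h2, filter_dot _ _ _ _ h1 h2,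
    filter_dot _ _ _ _ h1 h2, hvdot, mul_zero, zero_add]
end
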